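/- arXiv:2410.20370 — 3 statements merged into one kernel-verified Lean document; each statement's English description precedes it below -/
import Mathlib

section
/- Let Ω ⊂ ℂ be open and let u : Ω → (0,∞) be twice continuously differentiable (as a function of (x,y) with z = x+iy). Then Δ(log u) = (u·Δu − |∇u|²)/u² on Ω, and if for every τ ∈ ℂ the function z ↦ u(z) e^{2 Re(τ z)} has nonnegative Laplacian on Ω, then Δ(log u) ≥ 0 on Ω. -/
open MeasureTheory Filter Topology Set Pointwise
open scoped ENNReal NNReal Classical

noncomputable section

/-- The positive orthant `ℝⁿ₊ = [0,∞)ⁿ`. -/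
def posOrthant (n : ℕ) : Set (Fin n → ℝ) := {x | ∀ i, 0 ≤ x i}

/-- The supporting function `φ_S(ξ) = sup_{x ∈ S} ⟨x, ξ⟩` of a set `S ⊆ ℝⁿ`. -/
def suppFn {n : ℕ} (S : Set (Fin n → ℝ)) (ξ : Fin n → ℝ) : ℝ :=
  sSup ((fun x => ∑ i, x i * ξ i) '' S)

/-- `σ_S = φ_S(1,…,1)`. -/
def sigmaS {n : ℕ} (S : Set (Fin n → ℝ)) : ℝ := suppFn S 1

/-- `ℂ*ⁿ = (ℂ ∖ {0})ⁿ`. -/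
def torusComp (n : ℕ) : Set (Fin n → ℂ) := {z | ∀ i, z i ≠ 0}

/-- The logarithmic supporting function `H_S`:
`H_S(z) = φ_S(log|z₁|,…,log|zₙ|)` on `ℂ*ⁿ`, and the limsup over `ℂ*ⁿ ∋ w → z` elsewhere. -/
def HS {n : ℕ} (S : Set (Fin n → ℝ)) (z : Fin n → ℂ) : ℝ :=
  if z ∈ torusComp n then suppFn S (fun i => Real.log ‖z i‖)
  else Filter.limsup (fun w => suppFn S (fun i => Real.log ‖w i‖)) (𝓝[torusComp n] z)

/-- The positive part of an extended real number, as an element of `ℝ≥0∞`. -/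
def erealPos (x : EReal) : ℝ≥0∞ := if x = ⊤ then ⊤ else ENNReal.ofReal x.toReal

/-- The circle integral `∫₀^{2π} u(a + r e^{iθ} b) dθ` for an `EReal`-valued `u`,
defined as the (upper) integral of the positive part minus that of the negative part. -/
def circInt {n : ℕ} (u : (Fin n → ℂ) → EReal) (a b : Fin n → ℂ) (r : ℝ) : EReal :=
  ((∫⁻ θ in Set.Ioc (0 : ℝ) (2 * Real.pi),
      erealPos (u (a + ((r : ℂ) * Complex.exp ((θ : ℂ) * Complex.I)) • b))) : EReal) -
  ((∫⁻ θ in Set.Ioc (0 : ℝ) (2 * Real.pi),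
      erealPos (-u (a + ((r : ℂ) * Complex.exp ((θ : ℂ) * Complex.I)) • b))) : EReal)

/-- `u : Ω → [−∞,∞)` is plurisubharmonic on an open `Ω ⊆ ℂⁿ`: upper semicontinuous on `Ω`,
`< +∞` on `Ω`, not identically `−∞` on any connected component of `Ω`, and satisfying the
submean inequality `2π · u(a) ≤ ∫₀^{2π} u(a + r e^{iθ} b) dθ` over closed discs
`{a + ζ b : |ζ| ≤ r} ⊆ Ω` in complex lines. -/
def PshOn {n : ℕ} (Ω : Set (Fin n → ℂ)) (u : (Fin n → ℂ) → EReal) : Prop :=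
  UpperSemicontinuousOn u Ω ∧
  (∀ z ∈ Ω, u z ≠ ⊤) ∧
  (∀ z ∈ Ω, ∃ w ∈ connectedComponentIn Ω z, u w ≠ ⊥) ∧
  ∀ a b : Fin n → ℂ, ∀ r : ℝ, 0 < r →
    (∀ ζ : ℂ, ‖ζ‖ ≤ r → a + ζ • b ∈ Ω) →
    ((2 * Real.pi : ℝ) : EReal) * u a ≤ circInt u a b r

/-- The Lelong class `L^S(ℂⁿ)`: plurisubharmonic functions on `ℂⁿ` with `u ≤ H_S + c_u`. -/
def LelongClass {n : ℕ} (S : Set (Fin n → ℝ)) (u : (Fin n → ℂ) → EReal) : Prop :=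
  PshOn Set.univ u ∧ ∃ c : ℝ, ∀ z, u z ≤ ((HS S z + c : ℝ) : EReal)

/-- The Euclidean norm on `ℂⁿ`. -/
def eucNorm {n : ℕ} (z : Fin n → ℂ) : ℝ := Real.sqrt (∑ i, ‖z i‖ ^ 2)

/-- A distance function on `ℂⁿ`: continuous, vanishing exactly at `0`, and absolutely
homogeneous with respect to complex scalars. -/
def IsDistFn {n : ℕ} (μ : (Fin n → ℂ) → ℝ) : Prop :=
  Continuous μ ∧ (∀ z, 0 ≤ μ z) ∧ (∀ z, μ z = 0 ↔ z = 0) ∧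
    ∀ (t : ℂ) (z : Fin n → ℂ), μ (t • z) = ‖t‖ * μ z

/-- `r_μ = inf_{|z| = 1} μ(z)` (Euclidean unit sphere). -/
def rMu {n : ℕ} (μ : (Fin n → ℂ) → ℝ) : ℝ := sInf (μ '' {z | eucNorm z = 1})

/-- `S` is a lower set: `x ∈ S` implies `[0,x₁] × ⋯ × [0,xₙ] ⊆ S`. -/
def IsLowerIn {n : ℕ} (S : Set (Fin n → ℝ)) : Prop :=
  ∀ x ∈ S, ∀ y : Fin n → ℝ, (∀ i, 0 ≤ y i ∧ y i ≤ x i) → y ∈ S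

/-- The standard simplex `Σ = ch{0, e₁, …, eₙ}`. -/
def stdSimpl (n : ℕ) : Set (Fin n → ℝ) :=
  convexHull ℝ (insert 0 (Set.range fun i => Pi.single i 1))


/-- Directional derivative of `f : ℂ → ℝ` in the (real) direction `v`. -/
def pderivC (v : ℂ) (f : ℂ → ℝ) (z : ℂ) : ℝ := fderiv ℝ f z v

/-- The Laplacian `Δf = ∂²f/∂x² + ∂²f/∂y²` of `f : ℂ → ℝ`, `z = x + iy`. -/
def lapC (f : ℂ → ℝ) (z : ℂ) : ℝ :=
  pderivC 1 (pderivC 1 f) z + pderivC Complex.I (pderivC Complex.I f) z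

/-- `|∇f|² = (∂f/∂x)² + (∂f/∂y)²`. -/
def gradSqC (f : ℂ → ℝ) (z : ℂ) : ℝ := (pderivC 1 f z) ^ 2 + (pderivC Complex.I f z) ^ 2

/-- For `u : Ω → (0,∞)` twice continuously differentiable on open `Ω ⊆ ℂ`:
`Δ(log u) = (uΔu − |∇u|²)/u²` on `Ω`, and if `Δ(u e^{2Re(τz)}) ≥ 0` on `Ω` for every `τ ∈ ℂ`,
then `Δ(log u) ≥ 0` on `Ω`. -/
theorem statement9 (Ω : Set ℂ) (hΩ : IsOpen Ω) (u : ℂ → ℝ)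
    (hu : ContDiffOn ℝ 2 u Ω) (hpos : ∀ z ∈ Ω, 0 < u z) :
    (∀ z ∈ Ω, lapC (fun w => Real.log (u w)) z =
      (u z * lapC u z - gradSqC u z) / (u z) ^ 2) ∧
    ((∀ τ : ℂ, ∀ z ∈ Ω, 0 ≤ lapC (fun w => u w * Real.exp (2 * (τ * w).re)) z) →
      ∀ z ∈ Ω, 0 ≤ lapC (fun w => Real.log (u w)) z) := by
  have hu1 : ∀ w ∈ Ω, DifferentiableAt ℝ u w := fun w hw =>
    (hu.contDiffAt (hΩ.mem_nhds hw)).differentiableAt (by norm_num)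
  have hD : ContDiffOn ℝ 1 (fderiv ℝ u) Ω := hu.fderiv_of_isOpen hΩ (by norm_num)
  have hpd : ∀ (v : ℂ), ∀ w ∈ Ω, DifferentiableAt ℝ (pderivC v u) w := by
    intro v w hw
    have h1 : DifferentiableAt ℝ (fderiv ℝ u) w :=
      (hD.contDiffAt (hΩ.mem_nhds hw)).differentiableAt one_ne_zero
    exact (ContinuousLinearMap.apply ℝ ℝ v).differentiableAt.comp w h1
  have key_log : ∀ z ∈ Ω, ∀ v : ℂ,
      pderivC v (pderivC v (fun w => Real.log (u w))) z
        = (u z)⁻¹ * pderivC v (pderivC v u) z - ((u z)^2)⁻¹ * (pderivC v u z)^2 := by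
    intro z hz v
    have hev : (pderivC v fun w => Real.log (u w)) =ᶠ[nhds z]
        fun w => (u w)⁻¹ * pderivC v u w := by
      filter_upwards [hΩ.mem_nhds hz] with w hw
      have h2 : HasFDerivAt (fun y => Real.log (u y)) ((u w)⁻¹ • fderiv ℝ u w) w :=
        (Real.hasDerivAt_log (hpos w hw).ne').comp_hasFDerivAt w (hu1 w hw).hasFDerivAt
      simp [pderivC, h2.fderiv]
    have hinv : HasFDerivAt (fun w => (u w)⁻¹) ((-((u z)^2)⁻¹) • fderiv ℝ u z) z :=
      (hasDerivAt_inv (hpos z hz).ne').comp_hasFDerivAt z (hu1 z hz).hasFDerivAt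
    have hmul : HasFDerivAt (fun w => (u w)⁻¹ * pderivC v u w)
        ((u z)⁻¹ • fderiv ℝ (pderivC v u) z
          + pderivC v u z • ((-((u z)^2)⁻¹) • fderiv ℝ u z)) z :=
      hinv.mul (hpd v z hz).hasFDerivAt
    show fderiv ℝ (pderivC v fun w => Real.log (u w)) z v = _
    rw [hev.fderiv_eq, hmul.fderiv]
    simp [pderivC]
    all_goals ring
  refine ⟨?_, ?_⟩
  · intro z hz
    have h1 := key_log z hz 1
    have hI := key_log z hz Complex.I
    have hne : u z ≠ 0 := (hpos z hz).ne'
    simp only [lapC, gradSqC] at *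
    rw [h1, hI]
    field_simp
    ring
  · intro hyp z hz
    set L : ℂ → (ℂ →L[ℝ] ℝ) := fun τ =>
      (2 : ℝ) • (Complex.reCLM.comp (((ContinuousLinearMap.mul ℂ ℂ) τ).restrictScalars ℝ))
      with hLdef
    have hLval : ∀ τ w : ℂ, L τ w = 2 * (τ * w).re := by
      intro τ w; simp [hLdef]
    have key_exp : ∀ τ : ℂ, ∀ v : ℂ,
        pderivC v (pderivC v (fun w => u w * Real.exp (2 * (τ * w).re))) z
          = Real.exp (2 * (τ * z).re) *
            (pderivC v (pderivC v u) z + 2 * pderivC v u z * L τ v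
              + u z * (L τ v)^2) := by
      intro τ v
      have hE : ∀ w : ℂ, HasFDerivAt (fun y => Real.exp (2 * (τ * y).re))
          (Real.exp (2 * (τ * w).re) • L τ) w := by
        intro w
        have hL : HasFDerivAt (fun y : ℂ => 2 * (τ * y).re) (L τ) w := by
          have := (L τ).hasFDerivAt (x := w)
          refine this.congr_of_eventuallyEq ?_
          filter_upwards with y using (hLval τ y).symm
        exact (Real.hasDerivAt_exp (2 * (τ * w).re)).comp_hasFDerivAt w hL
      have hev : (pderivC v fun w => u w * Real.exp (2 * (τ * w).re)) =ᶠ[nhds z]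
          fun w => (pderivC v u w + u w * L τ v) * Real.exp (2 * (τ * w).re) := by
        filter_upwards [hΩ.mem_nhds hz] with w hw
        have hm : HasFDerivAt (fun y => u y * Real.exp (2 * (τ * y).re)) _ w :=
          (hu1 w hw).hasFDerivAt.mul (hE w)
        show fderiv ℝ _ w v = _
        rw [hm.fderiv]
        simp [pderivC]
        all_goals ring
      have hfac : HasFDerivAt (fun w => pderivC v u w + u w * L τ v)
          (fderiv ℝ (pderivC v u) z + (L τ v) • fderiv ℝ u z) z :=
        (hpd v z hz).hasFDerivAt.add ((hu1 z hz).hasFDerivAt.mul_const (L τ v))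
      have hmul : HasFDerivAt
          (fun w => (pderivC v u w + u w * L τ v) * Real.exp (2 * (τ * w).re)) _ z :=
        hfac.mul (hE z)
      show fderiv ℝ (pderivC v fun w => u w * Real.exp (2 * (τ * w).re)) z v = _
      rw [hev.fderiv_eq, hmul.fderiv]
      simp [pderivC]
      all_goals ring
    have hne : u z ≠ 0 := (hpos z hz).ne'
    have hupos := hpos z hz
    set a : ℝ := -(pderivC 1 u z) / (2 * u z) with ha
    set b : ℝ := (pderivC Complex.I u z) / (2 * u z) with hb
    set τ : ℂ := Complex.mk a b with hτ
    have h0 := hyp τ z hz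
    have hL1 : L τ 1 = 2 * a := by rw [hLval]; simp [hτ, Complex.ext_iff]
    have hLI : L τ Complex.I = -(2 * b) := by
      rw [hLval]; simp [hτ, Complex.ext_iff]
    have hEpos : (0:ℝ) < Real.exp (2 * (τ * z).re) := Real.exp_pos _
    rw [lapC, key_exp τ 1, key_exp τ Complex.I, hL1, hLI] at h0
    have h0' : 0 ≤ pderivC 1 (pderivC 1 u) z + 2 * pderivC 1 u z * (2 * a)
        + u z * (2 * a)^2
        + (pderivC Complex.I (pderivC Complex.I u) z
          + 2 * pderivC Complex.I u z * (-(2 * b)) + u z * (-(2 * b))^2) := by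
      by_contra hcon
      push_neg at hcon
      nlinarith [hEpos]
    have e1 : 2 * a * u z + pderivC 1 u z = 0 := by
      rw [ha]; field_simp; ring
    have e2 : 2 * b * u z - pderivC Complex.I u z = 0 := by
      rw [hb]; field_simp; ring
    have h3 : 0 ≤ u z * (pderivC 1 (pderivC 1 u) z + 2 * pderivC 1 u z * (2 * a)
        + u z * (2 * a)^2
        + (pderivC Complex.I (pderivC Complex.I u) z
          + 2 * pderivC Complex.I u z * (-(2 * b)) + u z * (-(2 * b))^2)) :=
      mul_nonneg hupos.le h0'
    have h5 : u z * (pderivC 1 (pderivC 1 u) z + 2 * pderivC 1 u z * (2 * a)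
        + u z * (2 * a)^2
        + (pderivC Complex.I (pderivC Complex.I u) z
          + 2 * pderivC Complex.I u z * (-(2 * b)) + u z * (-(2 * b))^2))
        = u z * lapC u z - gradSqC u z := by
      simp only [lapC, gradSqC]
      linear_combination (2 * a * u z + pderivC 1 u z) * e1
        + (2 * b * u z - pderivC Complex.I u z) * e2
    rw [h5] at h3
    have hkl := key_log z hz
    rw [lapC, hkl 1, hkl Complex.I]
    have h6 : (u z)⁻¹ * pderivC 1 (pderivC 1 u) z - ((u z)^2)⁻¹ * pderivC 1 u z ^ 2 +
        ((u z)⁻¹ * pderivC Complex.I (pderivC Complex.I u) z -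
          ((u z)^2)⁻¹ * pderivC Complex.I u z ^ 2)
        = (u z * lapC u z - gradSqC u z) / (u z)^2 := by
      simp only [lapC, gradSqC]; field_simp; ring
    rw [h6]
    positivity

end
end

section
/- Let S ⊂ ℝⁿ₊ be compact convex with 0 ∈ S, and suppose S is not a lower set. Then for every δ > 0 there exists w ∈ ℂⁿ with ‖w‖_∞ ≤ δ such that the function z ↦ H_S(z + w) − H_S(z) is not bounded above on ℂⁿ. Consequently H_S is not uniformly continuous on ℂⁿ. -/
open MeasureTheory Filter Topology Set Pointwise
open scoped ENNReal NNReal Classical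

noncomputable section

private lemma contSum' {n : ℕ} (ξ : Fin n → ℝ) :
    Continuous (fun x : Fin n → ℝ => ∑ i, x i * ξ i) :=
  continuous_finset_sum _ fun i _ => (continuous_apply i).mul continuous_const

private lemma le_suppFn' {n : ℕ} {S : Set (Fin n → ℝ)} (hScomp : IsCompact S)
    {x : Fin n → ℝ} (hx : x ∈ S) (ξ : Fin n → ℝ) :
    ∑ i, x i * ξ i ≤ suppFn S ξ :=
  le_csSup (hScomp.image (contSum' ξ)).bddAbove ⟨x, hx, rfl⟩

private lemma suppFn_le' {n : ℕ} {S : Set (Fin n → ℝ)} (hS : S.Nonempty) {ξ : Fin n → ℝ} {c : ℝ}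
    (h : ∀ a ∈ S, ∑ i, a i * ξ i ≤ c) : suppFn S ξ ≤ c :=
  csSup_le (hS.image _) (by rintro _ ⟨a, ha, rfl⟩; exact h a ha)

private lemma key' {n : ℕ} (S : Set (Fin n → ℝ))
    (hSsub : S ⊆ posOrthant n) (hSconv : Convex ℝ S) (hScomp : IsCompact S)
    (hS0 : (0 : Fin n → ℝ) ∈ S) (hSnl : ¬ IsLowerIn S) (δ : ℝ) (hδ : 0 < δ) :
    ∃ w : Fin n → ℂ, ‖w‖ ≤ δ ∧
      ¬ ∃ C : ℝ, ∀ z : Fin n → ℂ, HS S (z + w) - HS S z ≤ C := by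
  unfold IsLowerIn at hSnl
  push_neg at hSnl
  obtain ⟨x, hx, y, hy, hyS⟩ := hSnl
  obtain ⟨f, u, hfu, huy⟩ := geometric_hahn_banach_closed_point hSconv hScomp.isClosed hyS
  set ξ : Fin n → ℝ := fun i => f (fun j => if i = j then 1 else 0) with hξ
  have hf : ∀ a : Fin n → ℝ, f a = ∑ i, a i * ξ i := by
    intro a
    simpa [smul_eq_mul] using LinearMap.pi_apply_eq_sum_univ (f : (Fin n → ℝ) →ₗ[ℝ] ℝ) a
  set A : ℝ := ∑ i, x i * max (ξ i) 0 with hA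
  set B : ℝ := ∑ i, (if ξ i < 0 then x i * Real.log δ else 0) with hB
  have hxpos : ∀ i, 0 ≤ x i := hSsub hx
  have hAu : u < A := by
    have h1 : u < ∑ i, y i * ξ i := by rw [← hf]; exact huy
    have h2 : ∑ i, y i * ξ i ≤ ∑ i, y i * max (ξ i) 0 :=
      Finset.sum_le_sum fun i _ => mul_le_mul_of_nonneg_left (le_max_left _ _) (hy i).1
    have h3 : ∑ i, y i * max (ξ i) 0 ≤ A :=
      Finset.sum_le_sum fun i _ => mul_le_mul_of_nonneg_right (hy i).2 (le_max_right _ _)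
    linarith
  refine ⟨fun i => if ξ i < 0 then (δ : ℂ) else 0, ?_, ?_⟩
  · rw [pi_norm_le_iff_of_nonneg hδ.le]
    intro i
    split
    · simp [abs_of_pos hδ]
    · simp [hδ.le]
  rintro ⟨C, hC⟩
  set T : ℝ := max 0 ((C - B) / (A - u)) + 1 with hT
  have hT0 : 0 < T := by positivity
  set z : Fin n → ℂ := fun i => ((Real.exp (T * ξ i) : ℝ) : ℂ) with hz
  set ρ : Fin n → ℝ := fun i => Real.exp (T * ξ i) + (if ξ i < 0 then δ else 0) with hρ
  have hρpos : ∀ i, 0 < ρ i := by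
    intro i
    have := Real.exp_pos (T * ξ i)
    simp only [hρ]
    split <;> [linarith; linarith]
  have hzw : ∀ i, (z + (fun i => if ξ i < 0 then (δ : ℂ) else 0)) i = ((ρ i : ℝ) : ℂ) := by
    intro i
    simp only [Pi.add_apply, hz, hρ]
    split <;> push_cast <;> ring
  have hztor : z ∈ torusComp n := fun i => by
    simp [hz, Real.exp_ne_zero]
  have hzwtor : (z + fun i => if ξ i < 0 then (δ : ℂ) else 0) ∈ torusComp n := fun i => by
    rw [hzw i]
    exact_mod_cast (hρpos i).ne'
  have hHz : HS S z ≤ T * u := by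
    rw [HS, if_pos hztor]
    have : (fun i => Real.log ‖z i‖) = fun i => T * ξ i := by
      funext i
      show Real.log ‖((Real.exp (T * ξ i) : ℝ) : ℂ)‖ = T * ξ i
      rw [Complex.norm_real, Real.norm_eq_abs, abs_of_pos (Real.exp_pos _), Real.log_exp]
    rw [this]
    refine suppFn_le' ⟨0, hS0⟩ fun a ha => ?_
    have h1 : ∑ i, a i * ξ i ≤ u := by have := hf a; have := (hfu a ha).le; linarith
    calc ∑ i, a i * (T * ξ i) = T * ∑ i, a i * ξ i := by
          rw [Finset.mul_sum]; congr 1; funext i; ring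
      _ ≤ T * u := by nlinarith
  have hHzw : T * A + B ≤ HS S (z + fun i => if ξ i < 0 then (δ : ℂ) else 0) := by
    rw [HS, if_pos hzwtor]
    have hlog : (fun i => Real.log ‖(z + fun i => if ξ i < 0 then (δ : ℂ) else 0) i‖)
        = fun i => Real.log (ρ i) := by
      funext i
      rw [hzw i, Complex.norm_real, Real.norm_eq_abs, abs_of_pos (hρpos i)]
    rw [hlog]
    refine le_trans ?_ (le_suppFn' hScomp hx _)
    rw [hA, hB, Finset.mul_sum, ← Finset.sum_add_distrib]
    refine Finset.sum_le_sum fun i _ => ?_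
    by_cases hi : ξ i < 0
    · simp only [if_pos hi, max_eq_right hi.le, mul_zero, zero_add]
      have hρδ : δ ≤ ρ i := by
        simp only [hρ, if_pos hi]
        linarith [Real.exp_pos (T * ξ i)]
      exact mul_le_mul_of_nonneg_left (Real.log_le_log hδ hρδ) (hxpos i)
    · push_neg at hi
      simp only [if_neg (not_lt.2 hi), add_zero, max_eq_left hi]
      have : ρ i = Real.exp (T * ξ i) := by simp [hρ, not_lt.2 hi]
      rw [this, Real.log_exp]
      ring_nf
      exact le_refl _
  have hfinal := hC z
  have hTgt : C - B < T * (A - u) := by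
    have h1 : (C - B) / (A - u) < T := by
      rw [hT]; exact lt_of_le_of_lt (le_max_right _ _) (lt_add_one _)
    have hAu' : (0:ℝ) < A - u := by linarith
    calc C - B = ((C - B) / (A - u)) * (A - u) := (div_mul_cancel₀ _ hAu'.ne').symm
      _ < T * (A - u) := mul_lt_mul_of_pos_right h1 hAu'
  nlinarith [hHz, hHzw, hfinal]


/-- If the compact convex set `0 ∈ S ⊆ ℝⁿ₊` is not a lower set, then for
every `δ > 0` there is `w ∈ ℂⁿ` with `‖w‖_∞ ≤ δ` such that `z ↦ H_S(z+w) − H_S(z)` is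
unbounded above; consequently `H_S` is not uniformly continuous on `ℂⁿ`. -/
theorem statement11 {n : ℕ} (S : Set (Fin n → ℝ))
    (hSsub : S ⊆ posOrthant n) (hSconv : Convex ℝ S) (hScomp : IsCompact S)
    (hS0 : (0 : Fin n → ℝ) ∈ S) (hSnl : ¬ IsLowerIn S) :
    (∀ δ : ℝ, 0 < δ → ∃ w : Fin n → ℂ, ‖w‖ ≤ δ ∧
      ¬ ∃ C : ℝ, ∀ z : Fin n → ℂ, HS S (z + w) - HS S z ≤ C) ∧
    ¬ (∀ ε : ℝ, 0 < ε → ∃ d : ℝ, 0 < d ∧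
        ∀ x y : Fin n → ℂ, eucNorm y < d → |HS S (x + y) - HS S x| < ε) := by
  constructor
  · exact fun δ hδ => key' S hSsub hSconv hScomp hS0 hSnl δ hδ
  · intro h
    obtain ⟨d, hd, hball⟩ := h 1 one_pos
    have hδ : 0 < d / (n + 1) := by positivity
    obtain ⟨w, hw, hnb⟩ := key' S hSsub hSconv hScomp hS0 hSnl _ hδ
    have hew : eucNorm w < d := by
      rw [eucNorm, Real.sqrt_lt' hd]
      have hn1 : (0:ℝ) < (n:ℝ) + 1 := by positivity
      calc ∑ i, ‖w i‖ ^ 2 ≤ ∑ _i : Fin n, (d / (n + 1)) ^ 2 := by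
            refine Finset.sum_le_sum fun i _ => ?_
            have h1 : ‖w i‖ ≤ d / (n + 1) := (pi_norm_le_iff_of_nonneg hδ.le).1 hw i
            have h2 : ‖w i‖ ≤ d / (n + 1) := h1
            exact pow_le_pow_left₀ (norm_nonneg _) h2 2
        _ = (n : ℝ) * (d / (n + 1)) ^ 2 := by
            rw [Finset.sum_const, Finset.card_univ, Fintype.card_fin, nsmul_eq_mul]
        _ < d ^ 2 := by
            rw [div_pow, ← mul_div_assoc, div_lt_iff₀ (by positivity)]
            nlinarith [mul_pos (mul_pos hd hd)
              (show (0:ℝ) < (n:ℝ)^2 + (n:ℝ) + 1 by positivity)]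
    exact hnb ⟨1, fun z => le_of_lt (lt_of_le_of_lt (le_abs_self _) (hball z w hew))⟩


end
end

section
/- Let S ⊂ ℝⁿ₊ be compact convex with 0 ∈ S and S ≠ {0}, σ_S = φ_S(1,…,1) > 0, and let u : ℂⁿ → [−∞,∞) be upper semicontinuous with u ≤ H_S + c_u for a constant c_u ∈ ℝ. For δ ∈ (0, σ_S^{-1}) set R^b_δ u(z) = sup_{w∈ℂⁿ} { u(Zw) − δ^{−1} log(‖w − 1ₙ‖_∞ + 1) }, where Zw = (z₁w₁,…,zₙwₙ) and 1ₙ = (1,…,1). Then for every z ∈ ℂⁿ: u(z) ≤ R^b_{δ'} u(z) ≤ R^b_δ u(z) whenever 0 < δ' < δ < σ_S^{-1}, and R^b_δ u(z) → u(z) as δ ↘ 0. -/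
open MeasureTheory Filter Topology Set Pointwise
open scoped ENNReal NNReal Classical

noncomputable section

/-- The supremal convolution
`R^b_δ u(z) = sup_{w ∈ ℂⁿ} { u(Zw) − δ⁻¹ log(‖w − 1ₙ‖_∞ + 1) }`. -/
def Rb {n : ℕ} (δ : ℝ) (u : (Fin n → ℂ) → EReal) (z : Fin n → ℂ) : EReal :=
  ⨆ w : Fin n → ℂ, (u (z * w) - ((δ⁻¹ * Real.log (‖w - 1‖ + 1) : ℝ) : EReal))


section statement17Aux
variable {n : ℕ} {S : Set (Fin n → ℝ)}

private lemma st17_bddAbove_suppFn (hScomp : IsCompact S) (ξ : Fin n → ℝ) :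
    BddAbove ((fun x : Fin n → ℝ => ∑ i, x i * ξ i) '' S) :=
  (hScomp.image (by continuity)).bddAbove

private lemma st17_sum_le_sigma (hScomp : IsCompact S) {x : Fin n → ℝ} (hx : x ∈ S) :
    ∑ i, x i ≤ sigmaS S := by
  have := le_csSup (st17_bddAbove_suppFn hScomp 1) ⟨x, hx, rfl⟩
  simpa [sigmaS, suppFn] using this

private lemma st17_sigma_nonneg (hScomp : IsCompact S) (hS0 : (0 : Fin n → ℝ) ∈ S) :
    0 ≤ sigmaS S := by
  simpa using st17_sum_le_sigma hScomp hS0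

private lemma st17_suppFn_nonneg (hScomp : IsCompact S) (hS0 : (0 : Fin n → ℝ) ∈ S)
    (ξ : Fin n → ℝ) : 0 ≤ suppFn S ξ := by
  have := le_csSup (st17_bddAbove_suppFn hScomp ξ) ⟨0, hS0, rfl⟩
  simpa [suppFn] using this

private lemma st17_suppFn_le (hSsub : S ⊆ posOrthant n) (hScomp : IsCompact S)
    (hS0 : (0 : Fin n → ℝ) ∈ S) {ξ : Fin n → ℝ} {M : ℝ} (hM : 0 ≤ M)
    (hξ : ∀ i, ξ i ≤ M) : suppFn S ξ ≤ sigmaS S * M := by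
  apply Real.sSup_le
  · rintro y ⟨x, hx, rfl⟩
    calc ∑ i, x i * ξ i ≤ ∑ i, x i * M :=
          Finset.sum_le_sum fun i _ => mul_le_mul_of_nonneg_left (hξ i) (hSsub hx i)
      _ = (∑ i, x i) * M := by rw [Finset.sum_mul]
      _ ≤ sigmaS S * M := mul_le_mul_of_nonneg_right (st17_sum_le_sigma hScomp hx) hM
  · exact mul_nonneg (st17_sigma_nonneg hScomp hS0) hM

private lemma st17_suppFn_log_le (hSsub : S ⊆ posOrthant n) (hScomp : IsCompact S)
    (hS0 : (0 : Fin n → ℝ) ∈ S) (w : Fin n → ℂ) :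
    suppFn S (fun i => Real.log ‖w i‖) ≤
      sigmaS S * max 0 (Real.log (‖w‖ + 1)) := by
  refine st17_suppFn_le hSsub hScomp hS0 (le_max_left _ _) fun i => ?_
  rcases le_or_gt ‖w i‖ 1 with h | h
  · exact le_trans (Real.log_nonpos (norm_nonneg _) h) (le_max_left _ _)
  · refine le_trans (Real.log_le_log (lt_trans one_pos h) ?_) (le_max_right _ _)
    calc ‖w i‖ = ‖w i‖ := rfl
      _ ≤ ‖w‖ := norm_le_pi_norm w i
      _ ≤ ‖w‖ + 1 := by linarith

private lemma st17_dense_torusComp : Dense (torusComp n) := by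
  intro z
  rw [Metric.mem_closure_iff]
  intro ε hε
  refine ⟨fun i => if z i = 0 then ((ε/2 : ℝ) : ℂ) else z i, fun i => ?_, ?_⟩
  · by_cases h : z i = 0 <;> simp [h, ne_of_gt hε, Complex.ofReal_ne_zero.2]
  · rw [dist_pi_lt_iff hε]
    intro i
    by_cases h : z i = 0
    · simp only [h, if_pos]
      rw [dist_eq_norm]
      rw [zero_sub, norm_neg, Complex.norm_real, Real.norm_eq_abs, abs_of_pos (by linarith)]
      linarith
    · simp [h, hε]

private lemma st17_continuous_logbound :
    Continuous fun w : Fin n → ℂ => Real.log (‖w‖ + 1) := by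
  rw [continuous_iff_continuousAt]
  intro w
  exact (Real.continuousAt_log (by positivity)).comp
    ((continuous_norm.add continuous_const).continuousAt)

private lemma st17_HS_le (hSsub : S ⊆ posOrthant n) (hScomp : IsCompact S)
    (hS0 : (0 : Fin n → ℝ) ∈ S) (z : Fin n → ℂ) :
    HS S z ≤ sigmaS S * max 0 (Real.log (‖z‖ + 1)) := by
  unfold HS
  split_ifs with h
  · exact st17_suppFn_log_le hSsub hScomp hS0 z
  · have hne : (𝓝[torusComp n] z).NeBot :=
      mem_closure_iff_nhdsWithin_neBot.1 (st17_dense_torusComp z)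
    set g : (Fin n → ℂ) → ℝ := fun w => sigmaS S * max 0 (Real.log (‖w‖ + 1)) with hg
    have hgc : Continuous g :=
      continuous_const.mul (continuous_const.max st17_continuous_logbound)
    have hgt : Tendsto g (𝓝[torusComp n] z) (𝓝 (g z)) :=
      (hgc.tendsto z).mono_left nhdsWithin_le_nhds
    calc Filter.limsup (fun w => suppFn S (fun i => Real.log ‖w i‖))
          (𝓝[torusComp n] z)
        ≤ Filter.limsup g (𝓝[torusComp n] z) :=
          limsup_le_limsup
            (Eventually.of_forall fun w => st17_suppFn_log_le hSsub hScomp hS0 w)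
            (isCoboundedUnder_le_of_le _ fun w => st17_suppFn_nonneg hScomp hS0 _)
            hgt.isBoundedUnder_le
      _ = g z := hgt.limsup_eq

end statement17Aux

/-- For compact convex `0 ∈ S ⊆ ℝⁿ₊` with `S ≠ {0}` (so `σ_S > 0`), and an
upper semicontinuous `u : ℂⁿ → [−∞,∞)` with `u ≤ H_S + c_u`: for every `z ∈ ℂⁿ`,
`u(z) ≤ R^b_{δ'} u(z) ≤ R^b_δ u(z)` whenever `0 < δ' < δ < σ_S⁻¹`, and
`R^b_δ u(z) → u(z)` as `δ ↘ 0`. -/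

theorem statement17 {n : ℕ} (S : Set (Fin n → ℝ))
    (hSsub : S ⊆ posOrthant n) (hSconv : Convex ℝ S) (hScomp : IsCompact S)
    (hS0 : (0 : Fin n → ℝ) ∈ S) (hSne : S ≠ {0}) (hσ : 0 < sigmaS S)
    (u : (Fin n → ℂ) → EReal) (husc : UpperSemicontinuous u) (htop : ∀ z, u z ≠ ⊤)
    (c : ℝ) (hc : ∀ z, u z ≤ ((HS S z + c : ℝ) : EReal)) :
    ∀ z : Fin n → ℂ,
      (∀ δ δ' : ℝ, 0 < δ' → δ' < δ → δ < (sigmaS S)⁻¹ →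
        u z ≤ Rb δ' u z ∧ Rb δ' u z ≤ Rb δ u z) ∧
      Tendsto (fun d : ℝ => Rb d u z) (𝓝[>] (0 : ℝ)) (𝓝 (u z)) := by
  intro z
  have key1 : ∀ d : ℝ, u z ≤ Rb d u z := by
    intro d
    have := le_iSup (fun w => u (z * w) - ((d⁻¹ * Real.log (‖w - 1‖ + 1) : ℝ) : EReal)) 1
    simpa [Rb] using this
  have key2 : ∀ δ δ' : ℝ, 0 < δ' → δ' ≤ δ → Rb δ' u z ≤ Rb δ u z := by
    intro δ δ' h1 h2
    refine iSup_mono fun w => EReal.sub_le_sub le_rfl (EReal.coe_le_coe_iff.2 ?_)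
    have hlog : (0:ℝ) ≤ Real.log (‖w - 1‖ + 1) :=
      Real.log_nonneg (by linarith [norm_nonneg (w - 1)])
    exact mul_le_mul_of_nonneg_right (inv_anti₀ h1 h2) hlog
  refine ⟨fun δ δ' h1 h2 _ => ⟨key1 δ', key2 δ δ' h1 h2.le⟩, ?_⟩
  rw [tendsto_order]
  constructor
  · exact fun m hm => Eventually.of_forall fun d => lt_of_lt_of_le hm (key1 d)
  · intro M hM
    obtain ⟨r, hr1, hr2⟩ := EReal.lt_iff_exists_real_btwn.1 hM
    have hev : ∀ᶠ w in 𝓝 (1 : Fin n → ℂ), u (z * w) < (r : EReal) := by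
      have hcont : Tendsto (fun w : Fin n → ℂ => z * w) (𝓝 1) (𝓝 z) := by
        have : Continuous fun w : Fin n → ℂ => z * w := continuous_const.mul continuous_id
        simpa using this.tendsto 1
      exact hcont.eventually (husc z _ hr1)
    obtain ⟨ρ, hρ, hball⟩ := Metric.eventually_nhds_iff.1 hev
    set σ := sigmaS S with hσdef
    set A : ℝ := σ * max 0 (Real.log (‖z‖ + 1)) + c with hA
    set L0 : ℝ := Real.log (ρ + 1) with hL0def
    have hL0 : 0 < L0 := Real.log_pos (by linarith)
    set K : ℝ := max 1 ((A - r) / L0) with hK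
    have hK1 : (1:ℝ) ≤ K := le_max_left _ _
    have hσK : 0 < σ + K := by linarith
    have hAr : A - r ≤ K * L0 := by
      rw [← div_le_iff₀ hL0]; exact le_max_right _ _
    filter_upwards [Ioo_mem_nhdsGT_of_mem (Set.left_mem_Ico.2 (inv_pos.2 hσK))] with d hd
    obtain ⟨hd0, hdD⟩ := hd
    have hdinv : σ + K < d⁻¹ := by
      have := inv_strictAnti₀ hd0 hdD
      rwa [inv_inv] at this
    refine lt_of_le_of_lt (iSup_le fun w => ?_) hr2
    set L : ℝ := Real.log (‖w - 1‖ + 1) with hLdef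
    have hL : 0 ≤ L := Real.log_nonneg (by linarith [norm_nonneg (w - 1)])
    by_cases hw : dist w 1 < ρ
    · have h1 : u (z * w) ≤ (r : EReal) := (hball hw).le
      calc u (z * w) - ((d⁻¹ * L : ℝ) : EReal)
          ≤ (r : EReal) - (((0:ℝ)) : EReal) :=
            EReal.sub_le_sub h1 (EReal.coe_le_coe_iff.2
              (mul_nonneg (inv_nonneg.2 hd0.le) hL))
        _ = (r : EReal) := by norm_num
    · have hwd : ρ ≤ ‖w - 1‖ := by
        rw [dist_eq_norm] at hw; linarith [not_lt.1 hw]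
      have hσ0 : (0:ℝ) ≤ σ := st17_sigma_nonneg hScomp hS0
      have hnorm1 : ‖(1 : Fin n → ℂ)‖ ≤ 1 :=
        (pi_norm_le_iff_of_nonneg zero_le_one).2 fun i => by simp
      have hwn : ‖w‖ ≤ ‖w - 1‖ + 1 := by
        calc ‖w‖ = ‖(w - 1) + 1‖ := by ring_nf
          _ ≤ ‖w - 1‖ + ‖(1 : Fin n → ℂ)‖ := norm_add_le _ _
          _ ≤ ‖w - 1‖ + 1 := by linarith
      have hmul : ‖z * w‖ ≤ ‖z‖ * ‖w‖ := norm_mul_le z w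
      have hprod : ‖z * w‖ + 1 ≤ (‖z‖ + 1) * (‖w - 1‖ + 1) := by
        nlinarith [norm_nonneg z, norm_nonneg (w - 1), norm_nonneg w]
      have hlog1 : Real.log (‖z * w‖ + 1) ≤ Real.log (‖z‖ + 1) + L := by
        calc Real.log (‖z * w‖ + 1) ≤ Real.log ((‖z‖ + 1) * (‖w - 1‖ + 1)) :=
              Real.log_le_log (by positivity) hprod
          _ = Real.log (‖z‖ + 1) + L := by
              rw [Real.log_mul (by positivity) (by positivity)]
      have hmax : max 0 (Real.log (‖z * w‖ + 1)) ≤ max 0 (Real.log (‖z‖ + 1)) + L :=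
        max_le (by positivity) (le_trans hlog1 (add_le_add_left (le_max_right _ _) _))
      have hHS : HS S (z * w) + c ≤ A + σ * L := by
        have h1 := st17_HS_le hSsub hScomp hS0 (z * w)
        have h2 : σ * max 0 (Real.log (‖z * w‖ + 1)) ≤
            σ * (max 0 (Real.log (‖z‖ + 1)) + L) := mul_le_mul_of_nonneg_left hmax hσ0
        rw [hA]; nlinarith
      have hterm : u (z * w) ≤ ((A + σ * L : ℝ) : EReal) :=
        le_trans (hc (z * w)) (EReal.coe_le_coe_iff.2 hHS)
      have hLL0 : L0 ≤ L := Real.log_le_log (by linarith) (by linarith)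
      have hreal : A + σ * L - d⁻¹ * L ≤ r := by
        nlinarith [mul_le_mul_of_nonneg_right hdinv.le hL,
          mul_le_mul_of_nonneg_left hLL0 (by linarith : (0:ℝ) ≤ K)]
      calc u (z * w) - ((d⁻¹ * L : ℝ) : EReal)
          ≤ ((A + σ * L : ℝ) : EReal) - ((d⁻¹ * L : ℝ) : EReal) :=
            EReal.sub_le_sub hterm le_rfl
        _ = ((A + σ * L - d⁻¹ * L : ℝ) : EReal) := (EReal.coe_sub _ _).symm
        _ ≤ (r : EReal) := EReal.coe_le_coe_iff.2 hreal


end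
end
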